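/- Let n ≥ 1, i ∈ {1,…,n}, and A ⊆ [0,1]^n a compact set that separates the i-th opposite faces of [0,1]^n (i.e., no connected component of [0,1]^n \ A meets both the face {x : x_i = 0} and the face {x : x_i = 1}). Then there exists a compact connected subset S ⊆ A that separates the i-th opposite faces of [0,1]^n. -/

import Mathlib

def unitCube (n : ℕ) : Set (Fin n → ℝ) := Set.Icc 0 1

def face (n : ℕ) (i : Fin n) (v : ℝ) : Set (Fin n → ℝ) := {x ∈ unitCube n | x i = v}

/-- `A` connects the `i`-th opposite faces of the unit cube: some connected subset of `A`
meets both faces. -/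
def Connects (n : ℕ) (i : Fin n) (A : Set (Fin n → ℝ)) : Prop :=
  ∃ S ⊆ A, IsPreconnected S ∧ (S ∩ face n i 0).Nonempty ∧ (S ∩ face n i 1).Nonempty

/-- `A` separates the `i`-th opposite faces of the unit cube. -/
def Separates (n : ℕ) (i : Fin n) (A : Set (Fin n → ℝ)) : Prop :=
  ¬ Connects n i (unitCube n \ A)

/-- `U` is open in the subspace topology of the unit cube. -/
def OpenInCube (n : ℕ) (U : Set (Fin n → ℝ)) : Prop :=
  ∃ V : Set (Fin n → ℝ), IsOpen V ∧ U = V ∩ unitCube n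

open Set Topology Filter

variable {n : ℕ}

lemma mem_unitCube_iff {x : Fin n → ℝ} : x ∈ unitCube n ↔ ∀ j, 0 ≤ x j ∧ x j ≤ 1 := by
  simp [unitCube, Set.mem_Icc, Pi.le_def, forall_and]

lemma isClosed_unitCube : IsClosed (unitCube n) := isClosed_Icc
lemma isCompact_unitCube : IsCompact (unitCube n) := isCompact_Icc
lemma convex_unitCube : Convex ℝ (unitCube n) := convex_Icc _ _
lemma preconnected_unitCube : IsPreconnected (unitCube n) := convex_unitCube.isPreconnected

lemma face_subset {i : Fin n} {v : ℝ} : face n i v ⊆ unitCube n := fun _ h => h.1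

lemma convex_face {i : Fin n} {v : ℝ} : Convex ℝ (face n i v) := by
  have h1 : Convex ℝ {x : Fin n → ℝ | x i = v} := by
    intro a ha b hb s t hs ht hst
    simp only [mem_setOf_eq] at *
    simp [ha, hb, ← add_mul, hst]
  exact convex_unitCube.inter h1

lemma preconnected_face {i : Fin n} {v : ℝ} : IsPreconnected (face n i v) :=
  convex_face.isPreconnected

lemma face0_nonempty {i : Fin n} : (face n i 0).Nonempty :=
  ⟨0, ⟨left_mem_Icc.2 (by intro j; norm_num), rfl⟩⟩

lemma face1_nonempty {i : Fin n} : (face n i 1).Nonempty := by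
  refine ⟨fun j => if j = i then 1 else 0, ⟨?_, by simp⟩⟩
  rw [mem_unitCube_iff]
  intro j
  by_cases h : j = i <;> simp [h]

/-- monotonicity -/
lemma Separates.mono {i : Fin n} {A B : Set (Fin n → ℝ)} (hAB : A ⊆ B)
    (h : Separates n i A) : Separates n i B := by
  intro ⟨S, hS, h1, h2, h3⟩
  exact h ⟨S, hS.trans (diff_subset_diff_right hAB), h1, h2, h3⟩

lemma not_separates_empty {i : Fin n} : ¬ Separates n i (∅ : Set (Fin n → ℝ)) := by
  intro h
  exact h ⟨unitCube n, by simp, preconnected_unitCube,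
    by rw [inter_eq_self_of_subset_right face_subset]; exact face0_nonempty,
    by rw [inter_eq_self_of_subset_right face_subset]; exact face1_nonempty⟩

/-- the clamp retraction onto the cube -/
def clamp (x : Fin n → ℝ) : Fin n → ℝ := fun j => max 0 (min 1 (x j))

lemma clamp_mem (x : Fin n → ℝ) : clamp x ∈ unitCube n := by
  rw [mem_unitCube_iff]
  intro j
  constructor
  · exact le_max_left _ _
  · simp [clamp]

lemma clamp_eq {x : Fin n → ℝ} (hx : x ∈ unitCube n) : clamp x = x := by
  rw [mem_unitCube_iff] at hx
  funext j
  simp only [clamp]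
  rw [min_eq_right (hx j).2, max_eq_right (hx j).1]

lemma continuous_clamp : Continuous (clamp (n := n)) := by
  refine continuous_pi fun j => ?_
  exact continuous_const.max (continuous_const.min (continuous_apply j))

/-- From a failure to separate, get a compact preconnected connector. -/
lemma exists_compact_connector {i : Fin n} {C : Set (Fin n → ℝ)} (hC : IsClosed C)
    (h : ¬ Separates n i C) :
    ∃ T, IsCompact T ∧ IsPreconnected T ∧ T ⊆ unitCube n \ C ∧
      (T ∩ face n i 0).Nonempty ∧ (T ∩ face n i 1).Nonempty := by
  rw [Separates, not_not] at h
  obtain ⟨S, hS, hSconn, ⟨x0, hx0S, hx0f⟩, ⟨x1, hx1S, hx1f⟩⟩ := h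
  set O : Set (Fin n → ℝ) := clamp ⁻¹' Cᶜ with hO
  have hOopen : IsOpen O := hC.isOpen_compl.preimage continuous_clamp
  have hSO : S ⊆ O := by
    intro y hy
    have hy' := hS hy
    simp only [hO, mem_preimage, mem_compl_iff, clamp_eq hy'.1]
    exact hy'.2
  have hx0O : x0 ∈ O := hSO hx0S
  have hW : S ⊆ connectedComponentIn O x0 := hSconn.subset_connectedComponentIn hx0S hSO
  have hWopen : IsOpen (connectedComponentIn O x0) := hOopen.connectedComponentIn
  have hWconn : IsConnected (connectedComponentIn O x0) :=
    isConnected_connectedComponentIn_iff.mpr hx0O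
  have hWpath : IsPathConnected (connectedComponentIn O x0) :=
    (hWopen.isConnected_iff_isPathConnected.mp hWconn)
  have hjoined : JoinedIn (connectedComponentIn O x0) x0 x1 :=
    hWpath.joinedIn x0 (mem_connectedComponentIn hx0O) x1 (hW hx1S)
  obtain ⟨γ, hγ⟩ := hjoined
  refine ⟨clamp '' (range γ), ?_, ?_, ?_, ⟨x0, ?_, hx0f⟩, ⟨x1, ?_, hx1f⟩⟩
  · exact (isCompact_range γ.continuous).image continuous_clamp
  · exact (isConnected_range γ.continuous).isPreconnected.image _
      continuous_clamp.continuousOn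
  · rintro _ ⟨y, hy, rfl⟩
    obtain ⟨t, rfl⟩ := hy
    have := connectedComponentIn_subset O x0 (hγ t)
    exact ⟨clamp_mem _, this⟩
  · exact ⟨γ 0, ⟨0, rfl⟩, by rw [γ.source, clamp_eq (face_subset hx0f)]⟩
  · exact ⟨γ 1, ⟨1, rfl⟩, by rw [γ.target, clamp_eq (face_subset hx1f)]⟩

noncomputable instance : Fact ((0:ℝ) < 2) := ⟨two_pos⟩

/-- representative in `(-1, 1]` -/
noncomputable def repAC (z : AddCircle (2:ℝ)) : ℝ :=
  ((AddCircle.equivIoc 2 (-1) z : Set.Ioc (-1:ℝ) (-1+2)) : ℝ)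

lemma repAC_coe (z : AddCircle (2:ℝ)) : ((repAC z : ℝ) : AddCircle (2:ℝ)) = z :=
  (AddCircle.equivIoc 2 (-1)).symm_apply_apply z

lemma norm_neg_one_AC : ‖(((-1:ℝ)) : AddCircle (2:ℝ))‖ = 1 := by
  rw [AddCircle.norm_eq]
  have : round ((2:ℝ)⁻¹ * (-1)) = 0 := by
    rw [round_eq]; norm_num
  rw [this]; norm_num

lemma repAC_continuousAt {z : AddCircle (2:ℝ)} (hz : ‖z‖ < 1) : ContinuousAt repAC z := by
  have hne : z ≠ (((-1:ℝ)) : AddCircle (2:ℝ)) := by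
    intro h; rw [h, norm_neg_one_AC] at hz; linarith
  exact continuous_subtype_val.continuousAt.comp (AddCircle.continuousAt_equivIoc 2 (-1) hne)

/-- Circle lifting on the cube. -/
lemma exists_lift (θ : (Fin n → ℝ) → AddCircle (2:ℝ)) (hθ : ContinuousOn θ (unitCube n)) :
    ∃ G : (Fin n → ℝ) → ℝ, ContinuousOn G (unitCube n) ∧
      ∀ x ∈ unitCube n, ((G x : ℝ) : AddCircle (2:ℝ)) = θ x := by
  have hUC : UniformContinuousOn θ (unitCube n) :=
    isCompact_unitCube.uniformContinuousOn_of_continuous hθ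
  obtain ⟨δ, hδpos, hδ⟩ := (Metric.uniformContinuousOn_iff.mp hUC) (1/2) (by norm_num)
  obtain ⟨N, hN⟩ := exists_nat_gt (1/δ)
  have hNpos : (0:ℝ) < N := lt_trans (by positivity) hN
  have hN0 : (N:ℝ) ≠ 0 := ne_of_gt hNpos
  have hstep : (1:ℝ)/N < δ := by
    rw [div_lt_iff₀ hNpos]
    calc (1:ℝ) = δ * (1/δ) := by field_simp
    _ < δ * N := by exact mul_lt_mul_of_pos_left hN hδpos
  set c : ℕ → (Fin n → ℝ) → (Fin n → ℝ) := fun j x => ((j:ℝ)/N) • x with hc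
  have hcmem : ∀ (j : ℕ), j ≤ N → ∀ x ∈ unitCube n, c j x ∈ unitCube n := by
    intro j hj x hx
    rw [mem_unitCube_iff] at hx ⊢
    intro k
    have h0 : (0:ℝ) ≤ (j:ℝ)/N := by positivity
    have h1 : (j:ℝ)/N ≤ 1 := by
      rw [div_le_one hNpos]; exact_mod_cast hj
    constructor
    · exact mul_nonneg h0 (hx k).1
    · exact mul_le_one₀ h1 (hx k).1 (hx k).2
  have hnormx : ∀ x ∈ unitCube n, ‖x‖ ≤ 1 := by
    intro x hx
    rw [mem_unitCube_iff] at hx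
    refine (pi_norm_le_iff_of_nonneg (by norm_num)).mpr fun k => ?_
    rw [Real.norm_eq_abs, abs_le]
    exact ⟨by linarith [(hx k).1], (hx k).2⟩
  have hdist : ∀ (j : ℕ), ∀ x ∈ unitCube n, dist (c (j+1) x) (c j x) < δ := by
    intro j x hx
    have : c (j+1) x - c j x = ((1:ℝ)/N) • x := by
      rw [hc]
      simp only
      rw [← sub_smul]
      congr 1
      push_cast
      field_simp
      ring
    rw [dist_eq_norm, this, norm_smul]
    have h1 : ‖(1:ℝ)/N‖ = 1/N := by
      rw [Real.norm_eq_abs, abs_of_pos (by positivity)]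
    rw [h1]
    calc 1/(N:ℝ) * ‖x‖ ≤ 1/N * 1 := by
          exact mul_le_mul_of_nonneg_left (hnormx x hx) (by positivity)
    _ = 1/N := by ring
    _ < δ := hstep
  have hsmall : ∀ (j : ℕ), j < N → ∀ x ∈ unitCube n,
      ‖θ (c (j+1) x) - θ (c j x)‖ < 1/2 := by
    intro j hj x hx
    have h1 := hδ _ (hcmem (j+1) (by omega) x hx) _ (hcmem j (by omega) x hx) (hdist j x hx)
    rwa [dist_eq_norm] at h1
  set g : (Fin n → ℝ) → ℝ :=
    fun x => ∑ j ∈ Finset.range N, repAC (θ (c (j+1) x) - θ (c j x)) with hg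
  obtain ⟨r0, hr0⟩ : ∃ r0 : ℝ, ((r0 : ℝ) : AddCircle (2:ℝ)) = θ (c 0 0) :=
    ⟨repAC _, repAC_coe _⟩
  refine ⟨fun x => g x + r0, ?_, ?_⟩
  · refine ContinuousOn.add ?_ continuousOn_const
    refine continuousOn_finset_sum _ fun j hj => ?_
    simp only [Finset.mem_range] at hj
    intro x hx
    have hcj : ∀ m, m ≤ N → ContinuousWithinAt (fun x => θ (c m x)) (unitCube n) x := by
      intro m hm
      refine ContinuousOn.comp hθ ?_ (fun y hy => hcmem m hm y hy) |>.continuousWithinAt hx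
      exact (continuous_const_smul _).continuousOn
    have hw : ContinuousWithinAt (fun x => θ (c (j+1) x) - θ (c j x)) (unitCube n) x :=
      (hcj (j+1) (by omega)).sub (hcj j (by omega))
    have := ContinuousAt.comp_continuousWithinAt
      (g := repAC) (f := fun x => θ (c (j+1) x) - θ (c j x))
      (repAC_continuousAt (lt_trans (hsmall j hj x hx) (by norm_num))) hw
    exact this
  · intro x hx
    have hco : ((g x : ℝ) : AddCircle (2:ℝ)) = θ (c N x) - θ (c 0 x) := by
      have h1 : ((g x : ℝ) : AddCircle (2:ℝ)) =
          ∑ j ∈ Finset.range N, ((repAC (θ (c (j+1) x) - θ (c j x)) : ℝ) : AddCircle (2:ℝ)) :=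
        map_sum (QuotientAddGroup.mk' (AddSubgroup.zmultiples (2:ℝ))) _ _
      rw [h1]
      have h2 : ∀ j ∈ Finset.range N,
          ((repAC (θ (c (j+1) x) - θ (c j x)) : ℝ) : AddCircle (2:ℝ))
            = θ (c (j+1) x) - θ (c j x) := fun j _ => repAC_coe _
      rw [Finset.sum_congr rfl h2]
      exact Finset.sum_range_sub (fun j => θ (c j x)) N
    have hcN : c N x = x := by
      rw [hc]; simp only; rw [div_self hN0, one_smul]
    have hc0 : ∀ y, c 0 y = c 0 0 := by
      intro y; rw [hc]; simp
    have hadd : (((g x + r0 : ℝ)) : AddCircle (2:ℝ))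
        = ((g x : ℝ) : AddCircle (2:ℝ)) + ((r0 : ℝ) : AddCircle (2:ℝ)) := by
      exact map_add (QuotientAddGroup.mk' (AddSubgroup.zmultiples (2:ℝ))) _ _
    rw [hadd, hco, hcN, hc0 x, hr0]
    abel

lemma tendsto_or {α β : Type*} [TopologicalSpace β] {l : Filter α} {f g u : α → β} {L : β}
    (hu : ∀ y, u y = f y ∨ u y = g y) (hf : Tendsto f l (𝓝 L)) (hg : Tendsto g l (𝓝 L)) :
    Tendsto u l (𝓝 L) := by
  intro s hs
  have h1 := hf hs
  have h2 := hg hs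
  rw [mem_map] at h1 h2 ⊢
  filter_upwards [h1, h2] with y hy1 hy2
  rcases hu y with h | h
  · rwa [mem_preimage, h]
  · rwa [mem_preimage, h]

lemma preconn_subset_Ioo {P : Set ℝ} (hP : IsPreconnected P) (c : ℝ)
    (h : ∀ y ∈ P, ∀ k : ℤ, y ≠ 2*k + c) {y₀ : ℝ} (hy₀ : y₀ ∈ P) :
    ∃ k : ℤ, P ⊆ Ioo (2*k + c) (2*k + 2 + c) := by
  set k : ℤ := ⌊(y₀ - c)/2⌋ with hk
  have hfl := Int.floor_le ((y₀ - c)/2)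
  have hfl' := Int.lt_floor_add_one ((y₀ - c)/2)
  have hk1 : 2*(k:ℝ) + c < y₀ := by
    rcases lt_or_eq_of_le (by linarith : 2*(k:ℝ) + c ≤ y₀) with h' | h'
    · exact h'
    · exact absurd h'.symm (h y₀ hy₀ k)
  have hk2 : y₀ < 2*(k:ℝ) + 2 + c := by linarith
  refine ⟨k, fun y hy => ⟨?_, ?_⟩⟩
  · by_contra hle
    push_neg at hle
    have hmem : (2*(k:ℝ) + c) ∈ Icc y y₀ := ⟨hle, le_of_lt hk1⟩
    exact h _ (hP.Icc_subset hy hy₀ hmem) k rfl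
  · by_contra hle
    push_neg at hle
    have hmem : (2*(k:ℝ) + 2 + c) ∈ Icc y₀ y := ⟨le_of_lt hk2, hle⟩
    refine h _ (hP.Icc_subset hy₀ hy hmem) (k+1) ?_
    push_cast; ring

lemma coe_eq_coe_AC {a b : ℝ} :
    ((a : ℝ) : AddCircle (2:ℝ)) = ((b : ℝ) : AddCircle (2:ℝ)) ↔ ∃ k : ℤ, a = b + 2*k := by
  rw [QuotientAddGroup.eq_iff_sub_mem, AddSubgroup.mem_zmultiples_iff]
  constructor
  · rintro ⟨k, hk⟩
    refine ⟨k, ?_⟩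
    have : (k:ℝ) * 2 = a - b := by rw [← hk]; simp [zsmul_eq_mul]
    linarith
  · rintro ⟨k, hk⟩
    exact ⟨k, by simp [zsmul_eq_mul]; linarith⟩

lemma union_not_separates {i : Fin n} {A B : Set (Fin n → ℝ)}
    (hAc : IsCompact A) (hBc : IsCompact B) (hA : A ⊆ unitCube n) (hB : B ⊆ unitCube n)
    (hd : Disjoint A B) (hA' : ¬ Separates n i A) (hB' : ¬ Separates n i B) :
    ¬ Separates n i (A ∪ B) := by
  intro hsep
  rcases A.eq_empty_or_nonempty with rfl | hAne
  · exact hB' (by simpa using hsep)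
  rcases B.eq_empty_or_nonempty with rfl | hBne
  · exact hA' (by simpa using hsep)
  classical
  -- distance function
  set dA : (Fin n → ℝ) → ℝ := fun x => Metric.infDist x A with hdA
  set dB : (Fin n → ℝ) → ℝ := fun x => Metric.infDist x B with hdB
  have hdApos : ∀ x, x ∉ A → 0 < dA x := fun x hx =>
    (hAc.isClosed.notMem_iff_infDist_pos hAne).mp hx
  have hdBpos : ∀ x, x ∉ B → 0 < dB x := fun x hx =>
    (hBc.isClosed.notMem_iff_infDist_pos hBne).mp hx
  have hden : ∀ x, 0 < dA x + dB x := by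
    intro x
    by_cases hxA : x ∈ A
    · have : x ∉ B := fun hxB => (disjoint_left.mp hd hxA) hxB
      have := hdBpos x this
      have := Metric.infDist_nonneg (x := x) (s := A)
      simp only [hdA, hdB] at *
      linarith
    · have := hdApos x hxA
      have := Metric.infDist_nonneg (x := x) (s := B)
      simp only [hdA, hdB] at *
      linarith
  set h : (Fin n → ℝ) → ℝ := fun x => dA x / (dA x + dB x) with hh
  have hcont : Continuous h := by
    refine (Metric.continuous_infDist_pt A).div
      ((Metric.continuous_infDist_pt A).add (Metric.continuous_infDist_pt B))
      (fun x => (hden x).ne')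
  have h0 : ∀ x ∈ A, h x = 0 := by
    intro x hx
    simp [hh, hdA, Metric.infDist_zero_of_mem hx]
  have h1 : ∀ x ∈ B, h x = 1 := by
    intro x hx
    have hb : dB x = 0 := Metric.infDist_zero_of_mem hx
    have ha : dA x ≠ 0 := ne_of_gt (hdApos x (fun hxA => disjoint_left.mp hd hxA hx))
    simp [hh, hb, ha]
  have hmem01 : ∀ x, x ∉ A → x ∉ B → h x ∈ Ioo (0:ℝ) 1 := by
    intro x hxA hxB
    constructor
    · exact div_pos (hdApos x hxA) (hden x)
    · rw [div_lt_one (hden x)]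
      exact lt_add_of_pos_right _ (hdBpos x hxB)
  -- open sets
  set O : Set (Fin n → ℝ) := clamp ⁻¹' (A ∪ B)ᶜ with hO
  have hOopen : IsOpen O := (hAc.union hBc).isClosed.isOpen_compl.preimage continuous_clamp
  have hDnotO : ∀ x ∈ A ∪ B, x ∉ O := by
    intro x hx hxO
    rw [hO, mem_preimage, clamp_eq (by rcases hx with h|h; exacts [hA h, hB h])] at hxO
    exact hxO hx
  have hcubeO : ∀ x ∈ unitCube n, x ∉ A ∪ B → x ∈ O := by
    intro x hx hxD
    rw [hO, mem_preimage, clamp_eq hx]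
    exact hxD
  have hOnotD : ∀ x ∈ O, x ∉ A ∪ B := fun x hx hxD => hDnotO x hxD hx
  set U : Set (Fin n → ℝ) := {y | y ∈ O ∧ (pathComponentIn O y ∩ face n i 0).Nonempty} with hU
  set V : Set (Fin n → ℝ) := {y | y ∈ O ∧ ¬ (pathComponentIn O y ∩ face n i 0).Nonempty} with hV
  have hUV : ∀ y, y ∈ U → y ∈ V → False := fun y h1 h2 => h2.2 h1.2
  have hUVO : ∀ y ∈ O, y ∈ U ∨ y ∈ V := by
    intro y hy
    by_cases hc : (pathComponentIn O y ∩ face n i 0).Nonempty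
    · exact Or.inl ⟨hy, hc⟩
    · exact Or.inr ⟨hy, hc⟩
  have hUopen : IsOpen U := by
    rw [isOpen_iff_mem_nhds]
    intro y hy
    refine Filter.mem_of_superset
      ((hOopen.pathComponentIn y).mem_nhds (mem_pathComponentIn_self hy.1)) ?_
    intro y' hy'
    exact ⟨pathComponentIn_subset hy', by rw [pathComponentIn_congr hy']; exact hy.2⟩
  have hVopen : IsOpen V := by
    rw [isOpen_iff_mem_nhds]
    intro y hy
    refine Filter.mem_of_superset
      ((hOopen.pathComponentIn y).mem_nhds (mem_pathComponentIn_self hy.1)) ?_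
    intro y' hy'
    exact ⟨pathComponentIn_subset hy', by rw [pathComponentIn_congr hy']; exact hy.2⟩
  have hface0U : ∀ x ∈ face n i 0, x ∉ A ∪ B → x ∈ U := by
    intro x hx hxD
    have hxO : x ∈ O := hcubeO x (face_subset hx) hxD
    exact ⟨hxO, ⟨x, mem_pathComponentIn_self hxO, hx⟩⟩
  have hface1V : ∀ x ∈ face n i 1, x ∉ A ∪ B → x ∈ V := by
    intro x hx hxD
    have hxO : x ∈ O := hcubeO x (face_subset hx) hxD
    rcases hUVO x hxO with hxU | hxV
    · exfalso
      obtain ⟨z, hzP, hzf⟩ := hxU.2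
      obtain ⟨γ, hγ⟩ := hzP
      apply hsep
      refine ⟨clamp '' (range γ), ?_, ?_, ⟨z, ?_, hzf⟩, ⟨x, ?_, hx⟩⟩
      · rintro _ ⟨y, ⟨t, rfl⟩, rfl⟩
        exact ⟨clamp_mem _, hγ t⟩
      · exact ((isConnected_range γ.continuous).isPreconnected).image _ continuous_clamp.continuousOn
      · exact ⟨γ 1, ⟨1, rfl⟩, by rw [γ.target, clamp_eq (face_subset hzf)]⟩
      · exact ⟨γ 0, ⟨0, rfl⟩, by rw [γ.source, clamp_eq (face_subset hx)]⟩
    · exact hxV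
  -- the circle-valued map
  set θ : (Fin n → ℝ) → AddCircle (2:ℝ) :=
    fun x => if x ∈ V then ((-(h x) : ℝ) : AddCircle (2:ℝ)) else ((h x : ℝ) : AddCircle (2:ℝ))
    with hθdef
  have hcoe : Continuous ((↑) : ℝ → AddCircle (2:ℝ)) := continuous_coinduced_rng
  have hDeq : ∀ x ∈ A ∪ B, ((h x : ℝ) : AddCircle (2:ℝ)) = ((-(h x) : ℝ) : AddCircle (2:ℝ)) := by
    intro x hx
    rcases hx with hx | hx
    · rw [h0 x hx]; norm_num
    · have key : ((1:ℝ) : AddCircle (2:ℝ)) = ((-1:ℝ) : AddCircle (2:ℝ)) := by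
        have h2 := AddCircle.coe_add_period (2:ℝ) (-1)
        have h3 : (-1:ℝ) + 2 = 1 := by norm_num
        rw [h3] at h2
        exact h2
      rw [h1 x hx]
      exact key
  have hθcont : ContinuousOn θ (unitCube n) := by
    intro x hx
    by_cases hxV : x ∈ V
    · have hev : θ =ᶠ[𝓝 x] fun y => ((-(h y) : ℝ) : AddCircle (2:ℝ)) :=
        eventually_of_mem (hVopen.mem_nhds hxV) (fun y hy => if_pos hy)
      exact ((hcoe.comp hcont.neg).continuousAt.congr hev.symm).continuousWithinAt
    by_cases hxU : x ∈ U
    · have hev : θ =ᶠ[𝓝 x] fun y => ((h y : ℝ) : AddCircle (2:ℝ)) :=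
        eventually_of_mem (hUopen.mem_nhds hxU) (fun y hy => if_neg (fun hyV => hUV y hy hyV))
      exact ((hcoe.comp hcont).continuousAt.congr hev.symm).continuousWithinAt
    · have hxD : x ∈ A ∪ B := by
        by_contra hxD
        rcases hUVO x (hcubeO x hx hxD) with h' | h'
        exacts [hxU h', hxV h']
      have hθx : θ x = ((h x : ℝ) : AddCircle (2:ℝ)) := if_neg hxV
      rw [ContinuousWithinAt, hθx]
      refine tendsto_or (f := fun y => ((h y : ℝ) : AddCircle (2:ℝ)))
        (g := fun y => ((-(h y) : ℝ) : AddCircle (2:ℝ))) ?_ ?_ ?_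
      · intro y
        by_cases hyV : y ∈ V
        · exact Or.inr (if_pos hyV)
        · exact Or.inl (if_neg hyV)
      · exact ((hcoe.comp hcont).continuousAt).continuousWithinAt
      · rw [hDeq x hxD]
        exact ((hcoe.comp hcont.neg).continuousAt).continuousWithinAt
  obtain ⟨G, hGcont, hGcoe⟩ := exists_lift θ hθcont
  -- arithmetic facts about G
  have factA : ∀ x ∈ A, ∃ k : ℤ, G x = 2*k := by
    intro x hx
    have hxV : x ∉ V := fun h' => hDnotO x (Or.inl hx) h'.1
    have : ((G x : ℝ) : AddCircle (2:ℝ)) = (((0:ℝ)) : AddCircle (2:ℝ)) := by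
      rw [hGcoe x (hA hx), hθdef]
      simp only [if_neg hxV, h0 x hx]
    obtain ⟨k, hk⟩ := coe_eq_coe_AC.mp this
    exact ⟨k, by linarith⟩
  have factB : ∀ x ∈ B, ∃ k : ℤ, G x = 2*k + 1 := by
    intro x hx
    have hxV : x ∉ V := fun h' => hDnotO x (Or.inr hx) h'.1
    have : ((G x : ℝ) : AddCircle (2:ℝ)) = (((1:ℝ)) : AddCircle (2:ℝ)) := by
      rw [hGcoe x (hB hx), hθdef]
      simp only [if_neg hxV, h1 x hx]
    obtain ⟨k, hk⟩ := coe_eq_coe_AC.mp this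
    exact ⟨k, by linarith⟩
  have factU : ∀ x ∈ U, x ∈ unitCube n → ∃ k : ℤ, G x ∈ Ioo (2*(k:ℝ)) (2*k+1) := by
    intro x hxU hx
    have hxV : x ∉ V := fun h' => hUV x hxU h'
    have hxD := hOnotD x hxU.1
    have h01 := hmem01 x (fun h' => hxD (Or.inl h')) (fun h' => hxD (Or.inr h'))
    have : ((G x : ℝ) : AddCircle (2:ℝ)) = ((h x : ℝ) : AddCircle (2:ℝ)) := by
      rw [hGcoe x hx, hθdef]; simp only [if_neg hxV]
    obtain ⟨k, hk⟩ := coe_eq_coe_AC.mp this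
    exact ⟨k, by constructor <;> [linarith [h01.1]; linarith [h01.2]]⟩
  have factV : ∀ x ∈ V, x ∈ unitCube n → ∃ k : ℤ, G x ∈ Ioo (2*(k:ℝ)+1) (2*k+2) := by
    intro x hxV hx
    have hxD := hOnotD x hxV.1
    have h01 := hmem01 x (fun h' => hxD (Or.inl h')) (fun h' => hxD (Or.inr h'))
    have : ((G x : ℝ) : AddCircle (2:ℝ)) = ((-(h x) : ℝ) : AddCircle (2:ℝ)) := by
      rw [hGcoe x hx, hθdef]; simp only [if_pos hxV]
    obtain ⟨k, hk⟩ := coe_eq_coe_AC.mp this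
    refine ⟨k - 1, ?_⟩
    push_cast
    constructor <;> [linarith [h01.2]; linarith [h01.1]]
  have hpart : ∀ x ∈ unitCube n, x ∈ U ∨ x ∈ V ∨ x ∈ A ∨ x ∈ B := by
    intro x hx
    by_cases hxD : x ∈ A ∪ B
    · rcases hxD with h'|h'; exacts [Or.inr (Or.inr (Or.inl h')), Or.inr (Or.inr (Or.inr h'))]
    · rcases hUVO x (hcubeO x hx hxD) with h'|h'; exacts [Or.inl h', Or.inr (Or.inl h')]
  -- face0 : values in [2k0, 2k0+1]
  obtain ⟨x₀, hx₀⟩ := face0_nonempty (n := n) (i := i)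
  have hface0cases : ∀ x ∈ face n i 0, (∃ k:ℤ, G x ∈ Ioo (2*(k:ℝ)) (2*k+1)) ∨
      (∃ k:ℤ, G x = 2*(k:ℝ)) ∨ (∃ k:ℤ, G x = 2*(k:ℝ)+1) := by
    intro x hx
    rcases hpart x (face_subset hx) with h'|h'|h'|h'
    · exact Or.inl (factU x h' (face_subset hx))
    · exfalso
      have hxD := hOnotD x h'.1
      exact hUV x (hface0U x hx hxD) h'
    · exact Or.inr (Or.inl (factA x h'))
    · exact Or.inr (Or.inr (factB x h'))
  have hP0conn : IsPreconnected (G '' face n i 0) :=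
    preconnected_face.image G (hGcont.mono face_subset)
  obtain ⟨k0', hk0'⟩ := preconn_subset_Ioo hP0conn (-1/2) (by
      rintro y ⟨x, hx, rfl⟩ k hk
      rcases hface0cases x hx with ⟨m, hm⟩ | ⟨m, hm⟩ | ⟨m, hm⟩
      · have e1 : (4*(m:ℝ)) < 4*k - 1 := by rw [hk] at hm; linarith [hm.1]
        have e2 : (4*(k:ℝ)) - 1 < 4*m + 2 := by rw [hk] at hm; linarith [hm.2]
        have e1' : 4*m < 4*k - 1 := by exact_mod_cast e1
        have e2' : 4*k - 1 < 4*m + 2 := by exact_mod_cast e2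
        omega
      · have e1 : (4*(m:ℝ)) = 4*k - 1 := by rw [hk] at hm; linarith
        have e1' : 4*m = 4*k - 1 := by exact_mod_cast e1
        omega
      · have e1 : (4*(m:ℝ)) + 2 = 4*k - 1 := by rw [hk] at hm; linarith
        have e1' : 4*m + 2 = 4*k - 1 := by exact_mod_cast e1
        omega)
    ⟨x₀, hx₀, rfl⟩
  have hface0Icc : ∀ x ∈ face n i 0, G x ∈ Icc (2*(k0':ℝ)) (2*k0'+1) := by
    intro x hx
    have hIoo := hk0' ⟨x, hx, rfl⟩
    have hIoo1 : 2*(k0':ℝ) + (-1/2) < G x := hIoo.1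
    have hIoo2 : G x < 2*(k0':ℝ) + 2 + (-1/2) := hIoo.2
    rcases hface0cases x hx with ⟨m, hm⟩ | ⟨m, hm⟩ | ⟨m, hm⟩
    · have e1 : (4*(m:ℝ)) < 4*k0' + 3 := by linarith [hm.1]
      have e2 : (4*(k0':ℝ)) - 1 < 4*m + 2 := by linarith [hm.2]
      have e1' : 4*m < 4*k0' + 3 := by exact_mod_cast e1
      have e2' : 4*k0' - 1 < 4*m + 2 := by exact_mod_cast e2
      have : m = k0' := by omega
      subst this
      exact ⟨le_of_lt hm.1, le_of_lt hm.2⟩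
    · have e1 : (4*(k0':ℝ)) - 1 < 4*m := by linarith
      have e2 : (4*(m:ℝ)) < 4*k0' + 3 := by linarith
      have e1' : 4*k0' - 1 < 4*m := by exact_mod_cast e1
      have e2' : 4*m < 4*k0' + 3 := by exact_mod_cast e2
      have : m = k0' := by omega
      subst this
      rw [hm]
      constructor <;> linarith
    · have e1 : (4*(k0':ℝ)) - 1 < 4*m + 2 := by linarith
      have e2 : (4*(m:ℝ)) + 2 < 4*k0' + 3 := by linarith
      have e1' : 4*k0' - 1 < 4*m + 2 := by exact_mod_cast e1
      have e2' : 4*m + 2 < 4*k0' + 3 := by exact_mod_cast e2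
      have : m = k0' := by omega
      subst this
      rw [hm]
      constructor <;> linarith
  -- face1 : values in [2k1+1, 2k1+2]
  obtain ⟨x₁, hx₁⟩ := face1_nonempty (n := n) (i := i)
  have hface1cases : ∀ x ∈ face n i 1, (∃ k:ℤ, G x ∈ Ioo (2*(k:ℝ)+1) (2*k+2)) ∨
      (∃ k:ℤ, G x = 2*(k:ℝ)) ∨ (∃ k:ℤ, G x = 2*(k:ℝ)+1) := by
    intro x hx
    rcases hpart x (face_subset hx) with h'|h'|h'|h'
    · exfalso
      have hxD := hOnotD x h'.1
      exact hUV x h' (hface1V x hx hxD)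
    · exact Or.inl (factV x h' (face_subset hx))
    · exact Or.inr (Or.inl (factA x h'))
    · exact Or.inr (Or.inr (factB x h'))
  have hP1conn : IsPreconnected (G '' face n i 1) :=
    preconnected_face.image G (hGcont.mono face_subset)
  obtain ⟨k1', hk1'⟩ := preconn_subset_Ioo hP1conn (1/2) (by
      rintro y ⟨x, hx, rfl⟩ k hk
      rcases hface1cases x hx with ⟨m, hm⟩ | ⟨m, hm⟩ | ⟨m, hm⟩
      · have e1 : (4*(m:ℝ)) + 2 < 4*k + 1 := by rw [hk] at hm; linarith [hm.1]
        have e2 : (4*(k:ℝ)) + 1 < 4*m + 4 := by rw [hk] at hm; linarith [hm.2]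
        have e1' : 4*m + 2 < 4*k + 1 := by exact_mod_cast e1
        have e2' : 4*k + 1 < 4*m + 4 := by exact_mod_cast e2
        omega
      · have e1 : (4*(m:ℝ)) = 4*k + 1 := by rw [hk] at hm; linarith
        have e1' : 4*m = 4*k + 1 := by exact_mod_cast e1
        omega
      · have e1 : (4*(m:ℝ)) + 2 = 4*k + 1 := by rw [hk] at hm; linarith
        have e1' : 4*m + 2 = 4*k + 1 := by exact_mod_cast e1
        omega)
    ⟨x₁, hx₁, rfl⟩
  have hface1Icc : ∀ x ∈ face n i 1, G x ∈ Icc (2*(k1':ℝ)+1) (2*k1'+2) := by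
    intro x hx
    have hIoo := hk1' ⟨x, hx, rfl⟩
    have hIoo1 : 2*(k1':ℝ) + (1/2) < G x := hIoo.1
    have hIoo2 : G x < 2*(k1':ℝ) + 2 + (1/2) := hIoo.2
    rcases hface1cases x hx with ⟨m, hm⟩ | ⟨m, hm⟩ | ⟨m, hm⟩
    · have e1 : (4*(m:ℝ)) + 2 < 4*k1' + 5 := by linarith [hm.1]
      have e2 : (4*(k1':ℝ)) + 1 < 4*m + 4 := by linarith [hm.2]
      have e1' : 4*m + 2 < 4*k1' + 5 := by exact_mod_cast e1
      have e2' : 4*k1' + 1 < 4*m + 4 := by exact_mod_cast e2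
      have : m = k1' := by omega
      subst this
      exact ⟨le_of_lt hm.1, le_of_lt hm.2⟩
    · have e1 : (4*(k1':ℝ)) + 1 < 4*m := by linarith
      have e2 : (4*(m:ℝ)) < 4*k1' + 5 := by linarith
      have e1' : 4*k1' + 1 < 4*m := by exact_mod_cast e1
      have e2' : 4*m < 4*k1' + 5 := by exact_mod_cast e2
      have : m = k1' + 1 := by omega
      subst this
      rw [hm]
      push_cast
      constructor <;> linarith
    · have e1 : (4*(k1':ℝ)) + 1 < 4*m + 2 := by linarith
      have e2 : (4*(m:ℝ)) + 2 < 4*k1' + 5 := by linarith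
      have e1' : 4*k1' + 1 < 4*m + 2 := by exact_mod_cast e1
      have e2' : 4*m + 2 < 4*k1' + 5 := by exact_mod_cast e2
      have : m = k1' := by omega
      subst this
      rw [hm]
      constructor <;> linarith
  -- connector avoiding A
  obtain ⟨TA, _, hTAconn, hTAsub, ⟨xa0, hxa0T, hxa0f⟩, ⟨xa1, hxa1T, hxa1f⟩⟩ :=
    exists_compact_connector hAc.isClosed hA'
  have hTAcases : ∀ x ∈ TA, (∃ k:ℤ, G x ∈ Ioo (2*(k:ℝ)) (2*k+1)) ∨
      (∃ k:ℤ, G x ∈ Ioo (2*(k:ℝ)+1) (2*k+2)) ∨ (∃ k:ℤ, G x = 2*(k:ℝ)+1) := by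
    intro x hxT
    have hxc := (hTAsub hxT).1
    have hxA := (hTAsub hxT).2
    rcases hpart x hxc with h'|h'|h'|h'
    · exact Or.inl (factU x h' hxc)
    · exact Or.inr (Or.inl (factV x h' hxc))
    · exact absurd h' hxA
    · exact Or.inr (Or.inr (factB x h'))
  have hPAconn : IsPreconnected (G '' TA) :=
    hTAconn.image G (hGcont.mono (fun y hy => (hTAsub hy).1))
  obtain ⟨a, ha⟩ := preconn_subset_Ioo hPAconn 0 (by
      rintro y ⟨x, hx, rfl⟩ k hk
      rcases hTAcases x hx with ⟨m, hm⟩ | ⟨m, hm⟩ | ⟨m, hm⟩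
      · have e1 : (2*(m:ℝ)) < 2*k := by rw [hk] at hm; linarith [hm.1]
        have e2 : (2*(k:ℝ)) < 2*m + 1 := by rw [hk] at hm; linarith [hm.2]
        have e1' : 2*m < 2*k := by exact_mod_cast e1
        have e2' : 2*k < 2*m + 1 := by exact_mod_cast e2
        omega
      · have e1 : (2*(m:ℝ)) + 1 < 2*k := by rw [hk] at hm; linarith [hm.1]
        have e2 : (2*(k:ℝ)) < 2*m + 2 := by rw [hk] at hm; linarith [hm.2]
        have e1' : 2*m + 1 < 2*k := by exact_mod_cast e1
        have e2' : 2*k < 2*m + 2 := by exact_mod_cast e2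
        omega
      · have e1 : (2*(m:ℝ)) + 1 = 2*k := by rw [hk] at hm; linarith
        have e1' : 2*m + 1 = 2*k := by exact_mod_cast e1
        omega)
    ⟨xa0, hxa0T, rfl⟩
  -- a = k0'
  have hak0 : a = k0' := by
    have h1' := ha ⟨xa0, hxa0T, rfl⟩
    have h2' := hface0Icc xa0 hxa0f
    have e1 : (2*(a:ℝ)) < 2*k0' + 1 := by
      have := h1'.1; have := h2'.2; simp only [add_zero] at *; linarith
    have e2 : (2*(k0':ℝ)) < 2*a + 2 := by
      have := h1'.2; have := h2'.1; simp only [add_zero] at *; linarith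
    have e1' : 2*a < 2*k0' + 1 := by exact_mod_cast e1
    have e2' : 2*k0' < 2*a + 2 := by exact_mod_cast e2
    omega
  -- k1' = k0'
  have hk1k0 : k1' = k0' := by
    have h1' := ha ⟨xa1, hxa1T, rfl⟩
    have h2' := hface1Icc xa1 hxa1f
    rw [hak0] at h1'
    have e1 : (2*(k0':ℝ)) < 2*k1' + 2 := by
      have := h1'.1; have := h2'.2; simp only [add_zero] at *; linarith
    have e2 : (2*(k1':ℝ)) + 1 < 2*k0' + 2 := by
      have := h1'.2; have := h2'.1; simp only [add_zero] at *; linarith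
    have e1' : 2*k0' < 2*k1' + 2 := by exact_mod_cast e1
    have e2' : 2*k1' + 1 < 2*k0' + 2 := by exact_mod_cast e2
    omega
  -- connector avoiding B
  obtain ⟨TB, _, hTBconn, hTBsub, ⟨xb0, hxb0T, hxb0f⟩, ⟨xb1, hxb1T, hxb1f⟩⟩ :=
    exists_compact_connector hBc.isClosed hB'
  have hTBcases : ∀ x ∈ TB, (∃ k:ℤ, G x ∈ Ioo (2*(k:ℝ)) (2*k+1)) ∨
      (∃ k:ℤ, G x ∈ Ioo (2*(k:ℝ)+1) (2*k+2)) ∨ (∃ k:ℤ, G x = 2*(k:ℝ)) := by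
    intro x hxT
    have hxc := (hTBsub hxT).1
    have hxB := (hTBsub hxT).2
    rcases hpart x hxc with h'|h'|h'|h'
    · exact Or.inl (factU x h' hxc)
    · exact Or.inr (Or.inl (factV x h' hxc))
    · exact Or.inr (Or.inr (factA x h'))
    · exact absurd h' hxB
  have hPBconn : IsPreconnected (G '' TB) :=
    hTBconn.image G (hGcont.mono (fun y hy => (hTBsub hy).1))
  obtain ⟨b, hb⟩ := preconn_subset_Ioo hPBconn 1 (by
      rintro y ⟨x, hx, rfl⟩ k hk
      rcases hTBcases x hx with ⟨m, hm⟩ | ⟨m, hm⟩ | ⟨m, hm⟩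
      · have e1 : (2*(m:ℝ)) < 2*k + 1 := by rw [hk] at hm; linarith [hm.1]
        have e2 : (2*(k:ℝ)) + 1 < 2*m + 1 := by rw [hk] at hm; linarith [hm.2]
        have e1' : 2*m < 2*k + 1 := by exact_mod_cast e1
        have e2' : 2*k + 1 < 2*m + 1 := by exact_mod_cast e2
        omega
      · have e1 : (2*(m:ℝ)) + 1 < 2*k + 1 := by rw [hk] at hm; linarith [hm.1]
        have e2 : (2*(k:ℝ)) + 1 < 2*m + 2 := by rw [hk] at hm; linarith [hm.2]
        have e1' : 2*m + 1 < 2*k + 1 := by exact_mod_cast e1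
        have e2' : 2*k + 1 < 2*m + 2 := by exact_mod_cast e2
        omega
      · have e1 : (2*(m:ℝ)) = 2*k + 1 := by rw [hk] at hm; linarith
        have e1' : 2*m = 2*k + 1 := by exact_mod_cast e1
        omega)
    ⟨xb0, hxb0T, rfl⟩
  -- b = k0' - 1
  have hbk0 : b = k0' - 1 := by
    have h1' := hb ⟨xb0, hxb0T, rfl⟩
    have h2' := hface0Icc xb0 hxb0f
    have e1 : (2*(b:ℝ)) + 1 < 2*k0' + 1 := by
      have := h1'.1; have := h2'.2; linarith
    have e2 : (2*(k0':ℝ)) < 2*b + 3 := by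
      have := h1'.2; have := h2'.1; linarith
    have e1' : 2*b + 1 < 2*k0' + 1 := by exact_mod_cast e1
    have e2' : 2*k0' < 2*b + 3 := by exact_mod_cast e2
    omega
  -- final contradiction
  have h1' := hb ⟨xb1, hxb1T, rfl⟩
  have h2' := hface1Icc xb1 hxb1f
  rw [hbk0] at h1'
  rw [hk1k0] at h2'
  have e1 := h1'.2
  have e2 : 2*(k0':ℝ) + 1 ≤ G xb1 := h2'.1
  push_cast at e1
  linarith

lemma mem_foldr_union {y : Fin n → ℝ} : ∀ (l : List (Set (Fin n → ℝ))),
    y ∈ l.foldr (· ∪ ·) ∅ ↔ ∃ Q ∈ l, y ∈ Q := by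
  intro l
  induction l with
  | nil => simp
  | cons Q l ih => simp [ih]

lemma covered_not_separates {i : Fin n} {A : Set (Fin n → ℝ)} (hAcube : A ⊆ unitCube n) :
    ∀ (l : List (Set (Fin n → ℝ))),
    (∀ Q ∈ l, IsCompact Q ∧ Q ⊆ A ∧ IsCompact (A \ Q) ∧ ¬ Separates n i Q) →
    ∀ B : Set (Fin n → ℝ), IsCompact B → B ⊆ A → B ⊆ l.foldr (· ∪ ·) ∅ →
    ¬ Separates n i B := by
  intro l
  induction l with
  | nil =>
    intro _ B _ _ hBl
    have : B = ∅ := eq_empty_of_subset_empty (by simpa using hBl)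
    rw [this]
    exact not_separates_empty
  | cons Q l ih =>
    intro hl B hBc hBA hBl
    have hQ := hl Q (List.mem_cons_self)
    have hB1c : IsCompact (B ∩ Q) := hBc.inter hQ.1
    have hB1ns : ¬ Separates n i (B ∩ Q) := fun hs => hQ.2.2.2 (hs.mono inter_subset_right)
    have hB2c : IsCompact (B ∩ (A \ Q)) := hBc.inter hQ.2.2.1
    have hB2sub : B ∩ (A \ Q) ⊆ l.foldr (· ∪ ·) ∅ := by
      rintro y ⟨hyB, _, hyQ⟩
      have := hBl hyB
      rw [mem_foldr_union] at this ⊢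
      obtain ⟨R, hR, hyR⟩ := this
      rcases List.mem_cons.mp hR with rfl | hR'
      · exact absurd hyR hyQ
      · exact ⟨R, hR', hyR⟩
    have hB2ns : ¬ Separates n i (B ∩ (A \ Q)) :=
      ih (fun R hR => hl R (List.mem_cons_of_mem _ hR)) _ hB2c
        (inter_subset_right.trans diff_subset) hB2sub
    have hdisj : Disjoint (B ∩ Q) (B ∩ (A \ Q)) := by
      rw [disjoint_left]
      rintro y ⟨_, hyQ⟩ ⟨_, _, hyQ'⟩
      exact hyQ' hyQ
    have hunion : B = (B ∩ Q) ∪ (B ∩ (A \ Q)) := by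
      ext y
      constructor
      · intro hy
        by_cases hyQ : y ∈ Q
        · exact Or.inl ⟨hy, hyQ⟩
        · exact Or.inr ⟨hy, hBA hy, hyQ⟩
      · rintro (⟨hy, _⟩ | ⟨hy, _⟩) <;> exact hy
    rw [hunion]
    exact union_not_separates hB1c hB2c ((inter_subset_left).trans hBA |>.trans hAcube)
      ((inter_subset_left).trans hBA |>.trans hAcube) hdisj hB1ns hB2ns

lemma exists_clopen_piece {A : Set (Fin n → ℝ)} (hAc : IsCompact A) {x : Fin n → ℝ} (hx : x ∈ A)
    {T : Set (Fin n → ℝ)} (hT : IsCompact T) (hdisj : T ∩ connectedComponentIn A x = ∅) :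
    ∃ P, x ∈ P ∧ P ⊆ A ∧ IsCompact P ∧ IsCompact (A \ P) ∧ T ∩ P = ∅ := by
  haveI : CompactSpace A := isCompact_iff_compactSpace.mp hAc
  set x' : A := ⟨x, hx⟩ with hx'
  set K : Set A := (Subtype.val) ⁻¹' T with hK
  have hKclosed : IsClosed K := hT.isClosed.preimage continuous_subtype_val
  have hKcomp : IsCompact K := hKclosed.isCompact
  have hconn : connectedComponentIn A x = Subtype.val '' connectedComponent x' :=
    connectedComponentIn_eq_image hx
  have hKC : K ∩ ⋂ (Z : {Z : Set A // IsClopen Z ∧ x' ∈ Z}), (Z : Set A) = ∅ := by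
    rw [← connectedComponent_eq_iInter_isClopen x']
    ext z
    simp only [mem_inter_iff, mem_empty_iff_false, iff_false, not_and]
    intro hzK hzC
    have : (z : Fin n → ℝ) ∈ T ∩ connectedComponentIn A x := by
      refine ⟨hzK, ?_⟩
      rw [hconn]
      exact ⟨z, hzC, rfl⟩
    rw [hdisj] at this
    exact this
  obtain ⟨u, hu⟩ := hKcomp.elim_finite_subfamily_closed _
    (fun Z : {Z : Set A // IsClopen Z ∧ x' ∈ Z} => Z.2.1.isClosed) hKC
  set Z0 : Set A := ⋂ Z ∈ u, (Z : Set A) with hZ0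
  have hZ0clopen : IsClopen Z0 := isClopen_biInter_finset (fun Z _ => Z.2.1)
  have hxZ0 : x' ∈ Z0 := by
    rw [hZ0, mem_iInter₂]
    exact fun Z _ => Z.2.2
  refine ⟨Subtype.val '' Z0, ⟨x', hxZ0, rfl⟩, by rintro _ ⟨z, _, rfl⟩; exact z.2,
    (hZ0clopen.isClosed.isCompact).image continuous_subtype_val, ?_, ?_⟩
  · have himg : A \ Subtype.val '' Z0 = Subtype.val '' Z0ᶜ := by
      ext y
      constructor
      · rintro ⟨hyA, hyP⟩
        refine ⟨⟨y, hyA⟩, ?_, rfl⟩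
        intro hmem
        exact hyP ⟨⟨y, hyA⟩, hmem, rfl⟩
      · rintro ⟨z, hz, rfl⟩
        refine ⟨z.2, ?_⟩
        rintro ⟨z', hz', hzz⟩
        have : z' = z := Subtype.ext hzz
        rw [this] at hz'
        exact hz hz'
    rw [himg]
    exact (hZ0clopen.compl.isClosed.isCompact).image continuous_subtype_val
  · ext y
    simp only [mem_inter_iff, mem_empty_iff_false, iff_false, not_and]
    rintro hyT ⟨z, hz, rfl⟩
    have hzK : z ∈ K := hyT
    have : z ∈ K ∩ ⋂ Z ∈ u, (Z : Set A) := ⟨hzK, hz⟩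
    rw [hu] at this
    exact this

theorem stmt7 {n : ℕ} (i : Fin n) (A : Set (Fin n → ℝ)) (hA : A ⊆ unitCube n)
    (hc : IsCompact A) (hsep : Separates n i A) :
    ∃ S ⊆ A, IsCompact S ∧ IsConnected S ∧ Separates n i S := by
  by_contra hcon
  push_neg at hcon
  have key : ∀ x : A, ∃ P, (x : Fin n → ℝ) ∈ P ∧ P ⊆ A ∧ IsCompact P ∧ IsCompact (A \ P) ∧
      ¬ Separates n i P := by
    rintro ⟨x, hx⟩
    set C := connectedComponentIn A x with hC
    have hCsub : C ⊆ A := connectedComponentIn_subset _ _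
    have hCconn : IsConnected C := isConnected_connectedComponentIn_iff.mpr hx
    have hCcomp : IsCompact C := by
      haveI : CompactSpace A := isCompact_iff_compactSpace.mp hc
      rw [hC, connectedComponentIn_eq_image hx]
      exact (isClosed_connectedComponent.isCompact).image continuous_subtype_val
    have hnotsep : ¬ Separates n i C := hcon C hCsub hCcomp hCconn
    obtain ⟨T, hTcomp, hTconn, hTsub, hT0, hT1⟩ :=
      exists_compact_connector hCcomp.isClosed hnotsep
    have hdisj : T ∩ C = ∅ := by
      ext y
      simp only [mem_inter_iff, mem_empty_iff_false, iff_false, not_and]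
      intro hyT hyC
      exact (hTsub hyT).2 hyC
    obtain ⟨P, hxP, hPA, hPc, hAPc, hTP⟩ := exists_clopen_piece hc hx hTcomp hdisj
    refine ⟨P, hxP, hPA, hPc, hAPc, fun hsepP => hsepP ⟨T, ?_, hTconn, hT0, hT1⟩⟩
    intro y hy
    refine ⟨(hTsub hy).1, fun hyP => ?_⟩
    have : y ∈ T ∩ P := ⟨hy, hyP⟩
    rw [hTP] at this
    exact this
  choose P hxP hPA hPc hAPc hPns using key
  have hopen : ∀ x : A, IsOpen ((A \ P x)ᶜ) := fun x => (hAPc x).isClosed.isOpen_compl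
  have hcover : A ⊆ ⋃ x : A, (A \ P x)ᶜ := by
    intro y hy
    refine mem_iUnion.mpr ⟨⟨y, hy⟩, ?_⟩
    simp only [mem_compl_iff, mem_diff, not_and, not_not]
    intro _
    exact hxP ⟨y, hy⟩
  obtain ⟨t, ht⟩ := hc.elim_finite_subcover _ hopen hcover
  set l : List (Set (Fin n → ℝ)) := t.toList.map P with hl
  have hAl : A ⊆ l.foldr (· ∪ ·) ∅ := by
    intro y hy
    rw [mem_foldr_union]
    obtain ⟨x, hxt, hyx⟩ := mem_iUnion₂.mp (ht hy)
    refine ⟨P x, ?_, ?_⟩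
    · rw [hl]
      exact List.mem_map_of_mem (f := P) (Finset.mem_toList.mpr hxt)
    · by_contra hyP
      exact (mem_compl_iff _ _).mp hyx ⟨hy, hyP⟩
  have := covered_not_separates hA l (by
      intro Q hQ
      rw [hl] at hQ
      obtain ⟨x, _, rfl⟩ := List.mem_map.mp hQ
      exact ⟨hPc x, hPA x, hAPc x, hPns x⟩) A hc subset_rfl hAl
  exact this hsep
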